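/- Let T be a finite rooted tree with vertex set V, root ρ, and arc set A (arcs directed away from the root). Consider a two-state Markov process on T with root distribution π on {0,1} and a 2×2 transition matrix P(r,s) for each arc (r,s), where each P(r,s) has non-negative entries and det P(r,s) ≥ 0. Define, for a state assignment U : V → {0,1}, P(U) = π(U(ρ)) · ∏_{(r,s)∈A} P(r,s)(U(r), U(s)). Then for any two assignments Y, Z : V → {0,1}, P(Y)·P(Z) ≤ P(Y ∨ Z)·P(Y ∧ Z), where ∨ and ∧ denote pointwise max and min. -/

import Mathlib

lemma aux_fkg (M : Matrix (Fin 2) (Fin 2) ℝ) (hpos : ∀ i j, 0 ≤ M i j)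
    (hdet : 0 ≤ M.det) (a b c d : Fin 2) :
    M a c * M b d ≤ M (max a b) (max c d) * M (min a b) (min c d) := by
  rw [Matrix.det_fin_two] at hdet
  fin_cases a <;> fin_cases b <;> fin_cases c <;> fin_cases d <;>
    simp_all <;> nlinarith [hpos.1.1, hpos.1.2, hpos.2.1, hpos.2.2]

/-- Log-supermodularity of the probability of a full state assignment for a two-state
Markov process on a rooted tree whose transition matrices have non-negative determinant. -/
theorem stmt_5 {V : Type} [Fintype V] (ρ : V) (A : Finset (V × V))
    -- tree structure: arcs directed away from the root
    (hroot : ∀ a ∈ A, a.2 ≠ ρ)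
    (hparent : ∀ v : V, v ≠ ρ → ∃! r : V, (r, v) ∈ A)
    -- root distribution
    (π : Fin 2 → ℝ) (hπ : ∀ i, 0 ≤ π i) (hπ1 : π 0 + π 1 = 1)
    -- transition matrices on arcs
    (P : V → V → Matrix (Fin 2) (Fin 2) ℝ)
    (hP : ∀ a ∈ A, ∀ i j, 0 ≤ P a.1 a.2 i j)
    (hProw : ∀ a ∈ A, ∀ i : Fin 2, P a.1 a.2 i 0 + P a.1 a.2 i 1 = 1)
    (hPdet : ∀ a ∈ A, 0 ≤ (P a.1 a.2).det)
    (Y Z : V → Fin 2) :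
    (π (Y ρ) * ∏ a ∈ A, P a.1 a.2 (Y a.1) (Y a.2)) *
      (π (Z ρ) * ∏ a ∈ A, P a.1 a.2 (Z a.1) (Z a.2)) ≤
    (π (max (Y ρ) (Z ρ)) * ∏ a ∈ A, P a.1 a.2 (max (Y a.1) (Z a.1)) (max (Y a.2) (Z a.2))) *
      (π (min (Y ρ) (Z ρ)) * ∏ a ∈ A, P a.1 a.2 (min (Y a.1) (Z a.1)) (min (Y a.2) (Z a.2))) := by
  have hπeq : π (max (Y ρ) (Z ρ)) * π (min (Y ρ) (Z ρ)) = π (Y ρ) * π (Z ρ) := by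
    rcases le_total (Y ρ) (Z ρ) with h | h <;>
      simp [max_eq_right, min_eq_left, max_eq_left, min_eq_right, h, mul_comm]
  have hprod : ∏ a ∈ A, (P a.1 a.2 (Y a.1) (Y a.2) * P a.1 a.2 (Z a.1) (Z a.2)) ≤
      ∏ a ∈ A, (P a.1 a.2 (max (Y a.1) (Z a.1)) (max (Y a.2) (Z a.2)) *
        P a.1 a.2 (min (Y a.1) (Z a.1)) (min (Y a.2) (Z a.2))) := by
    refine Finset.prod_le_prod (fun a ha => ?_) (fun a ha => ?_)
    · exact mul_nonneg (hP a ha _ _) (hP a ha _ _)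
    · exact aux_fkg _ (hP a ha) (hPdet a ha) _ _ _ _
  calc (π (Y ρ) * ∏ a ∈ A, P a.1 a.2 (Y a.1) (Y a.2)) *
      (π (Z ρ) * ∏ a ∈ A, P a.1 a.2 (Z a.1) (Z a.2))
      = (π (Y ρ) * π (Z ρ)) *
        ∏ a ∈ A, (P a.1 a.2 (Y a.1) (Y a.2) * P a.1 a.2 (Z a.1) (Z a.2)) := by
        rw [Finset.prod_mul_distrib]; ring
    _ ≤ (π (Y ρ) * π (Z ρ)) *
        ∏ a ∈ A, (P a.1 a.2 (max (Y a.1) (Z a.1)) (max (Y a.2) (Z a.2)) *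
          P a.1 a.2 (min (Y a.1) (Z a.1)) (min (Y a.2) (Z a.2))) :=
        mul_le_mul_of_nonneg_left hprod (mul_nonneg (hπ _) (hπ _))
    _ = _ := by rw [← hπeq, Finset.prod_mul_distrib]; ring
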